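/- Let V₁, ..., V_n be independent nonnegative random variables with continuous CDFs, σ a uniform random permutation, τ with p = P(max_i V_i ≤ τ) ∈ (0,1), and T the stopping time of the single-threshold rule at τ. Then for every t ≥ 0, P(V_{σ(T)} > t) ≥ min{1-p, (1-p)/(-ln p)} · P(max_{i∈[n]} V_i > t). -/

import Mathlib

open MeasureTheory ProbabilityTheory Finset


lemma count_first {n : ℕ} (A B : Finset (Fin n)) (hBA : B ⊆ A) :
    (Finset.univ.filter (fun π : Equiv.Perm (Fin n) =>
      ∃ j : Fin n, (∀ j' : Fin n, j' < j → π j' ∉ A) ∧ π j ∈ B)).card * A.card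
      = B.card * (Nat.factorial n) := by
  classical
  set Q : Equiv.Perm (Fin n) → Fin n → Prop :=
    fun π a => ∃ j : Fin n, (∀ j' : Fin n, j' < j → π j' ∉ A) ∧ π j = a with hQ
  -- uniqueness of the witness a ∈ A
  have hQuniq : ∀ π a b, a ∈ A → b ∈ A → Q π a → Q π b → a = b := by
    rintro π a b ha hb ⟨j, hj1, hj2⟩ ⟨k, hk1, hk2⟩
    rcases lt_trichotomy j k with h | h | h
    · exact absurd (hj2 ▸ hk1 j h) (by simp [ha])
    · rw [← hj2, ← hk2, h]
    · exact absurd (hk2 ▸ hj1 k h) (by simp [hb])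
  -- existence when A nonempty
  have hQex : ∀ π : Equiv.Perm (Fin n), A.Nonempty → ∃ a ∈ A, Q π a := by
    intro π ⟨a0, ha0⟩
    have hne : (A.image ⇑π.symm).Nonempty := ⟨π.symm a0, mem_image_of_mem _ ha0⟩
    set jm := (A.image ⇑π.symm).min' hne with hjm
    have hjmem : jm ∈ A.image ⇑π.symm := min'_mem _ _
    obtain ⟨a, ha, hEq⟩ := mem_image.1 hjmem
    refine ⟨a, ha, jm, ?_, by rw [← hEq]; simp⟩
    intro j' hj' hmem
    have : jm ≤ j' := min'_le _ _ (mem_image.2 ⟨π j', hmem, by simp⟩)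
    exact absurd hj' (not_lt.2 this)
  -- the counts N a are equal for a, b ∈ A
  have hswapA : ∀ a b x, a ∈ A → b ∈ A → ((Equiv.swap a b) x ∈ A ↔ x ∈ A) := by
    intro a b x ha hb
    rcases eq_or_ne x a with rfl | hxa
    · simp [Equiv.swap_apply_left, ha, hb]
    rcases eq_or_ne x b with rfl | hxb
    · simp [Equiv.swap_apply_right, ha, hb]
    · rw [Equiv.swap_apply_of_ne_of_ne hxa hxb]
  have hNeq : ∀ a b, a ∈ A → b ∈ A →
      (univ.filter (fun π => Q π a)).card = (univ.filter (fun π => Q π b)).card := by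
    intro a b ha hb
    apply Finset.card_bij' (fun π _ => Equiv.swap a b * π) (fun π _ => Equiv.swap a b * π)
    · intro π hπ
      simp only [mem_filter, mem_univ, true_and] at hπ ⊢
      obtain ⟨j, hj1, hj2⟩ := hπ
      refine ⟨j, fun j' hj' => ?_, ?_⟩
      · have := hj1 j' hj'
        simpa [Equiv.Perm.mul_apply, hswapA a b (π j') ha hb] using this
      · simp [Equiv.Perm.mul_apply, hj2, Equiv.swap_apply_left]
    · intro π hπ
      simp only [mem_filter, mem_univ, true_and] at hπ ⊢
      obtain ⟨j, hj1, hj2⟩ := hπ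
      refine ⟨j, fun j' hj' => ?_, ?_⟩
      · have := hj1 j' hj'
        simpa [Equiv.Perm.mul_apply, hswapA a b (π j') ha hb] using this
      · simp [Equiv.Perm.mul_apply, hj2, Equiv.swap_apply_right]
    · intro π _; ext x; simp [Equiv.Perm.mul_apply, Equiv.swap_apply_self]
    · intro π _; ext x; simp [Equiv.Perm.mul_apply, Equiv.swap_apply_self]
  rcases B.eq_empty_or_nonempty with rfl | hBne
  · simp only [card_empty, zero_mul]
    convert zero_mul A.card
    rw [Finset.card_eq_zero, Finset.filter_eq_empty_iff]
    rintro π - ⟨j, -, hj⟩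
    exact absurd hj (notMem_empty _)
  have hAne : A.Nonempty := hBne.mono hBA
  -- partition: filter P = biUnion over a ∈ B
  have hpart : ∀ (C : Finset (Fin n)), C ⊆ A →
      (Finset.univ.filter (fun π : Equiv.Perm (Fin n) =>
        ∃ j : Fin n, (∀ j' : Fin n, j' < j → π j' ∉ A) ∧ π j ∈ C)).card
      = ∑ a ∈ C, (univ.filter (fun π => Q π a)).card := by
    intro C hCA
    rw [← Finset.card_biUnion]
    · congr 1
      ext π
      simp only [mem_filter, mem_univ, true_and, mem_biUnion]
      constructor
      · rintro ⟨j, hj1, hj2⟩; exact ⟨π j, hj2, j, hj1, rfl⟩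
      · rintro ⟨a, haC, j, hj1, hj2⟩; exact ⟨j, hj1, hj2 ▸ haC⟩
    · intro a haC b hbC hab
      apply Finset.disjoint_left.2
      intro π hπa hπb
      simp only [mem_filter, mem_univ, true_and] at hπa hπb
      exact hab (hQuniq π a b (hCA haC) (hCA hbC) hπa hπb)
  -- total over A is n!
  obtain ⟨a0, ha0⟩ := hAne
  set c := (univ.filter (fun π => Q π a0)).card with hc
  have hconst : ∀ a ∈ A, (univ.filter (fun π => Q π a)).card = c := fun a ha => hNeq a a0 ha ha0
  have htot : c * A.card = Nat.factorial n := by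
    have h1 := hpart A le_rfl
    have h2 : (Finset.univ.filter (fun π : Equiv.Perm (Fin n) =>
        ∃ j : Fin n, (∀ j' : Fin n, j' < j → π j' ∉ A) ∧ π j ∈ A)).card
        = Fintype.card (Equiv.Perm (Fin n)) := by
      rw [← Finset.card_univ]
      congr 1
      rw [Finset.filter_eq_self]
      intro π _
      obtain ⟨a, ha, j, hj1, hj2⟩ := hQex π ⟨a0, ha0⟩
      exact ⟨j, hj1, hj2 ▸ ha⟩
    rw [h2, Fintype.card_perm, Fintype.card_fin] at h1
    rw [Finset.sum_congr rfl hconst, Finset.sum_const, smul_eq_mul] at h1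
    rw [mul_comm]; exact h1.symm
  rw [hpart B hBA, Finset.sum_congr rfl (fun a ha => hconst a (hBA ha)), Finset.sum_const,
    smul_eq_mul, mul_assoc, htot]


lemma card_filter_subtype {α : Type*} (s : Finset α) (p : α → Prop) [DecidablePred p] :
    ((Finset.univ : Finset {x // x ∈ s}).filter (fun x : {x // x ∈ s} => p ↑x)).card
      = (s.filter p).card := by
  rw [Finset.univ_eq_attach, Finset.filter_attach]
  simp

lemma measurable_card_filter {ι : Type*} [Fintype ι] [MeasurableSpace ι] (τ0 : ℝ) :
    Measurable (fun f : ι → ℝ => (Finset.univ.filter (fun k => τ0 < f k)).card) := by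
  classical
  have : (fun f : ι → ℝ => (Finset.univ.filter (fun k => τ0 < f k)).card)
      = fun f => ∑ k : ι, if τ0 < f k then 1 else 0 := by
    funext f; rw [Finset.card_filter]
  rw [this]
  apply Finset.measurable_sum
  intro k _
  exact Measurable.ite (measurableSet_lt measurable_const (measurable_pi_apply k))
    measurable_const measurable_const

lemma indep_pair {Ω : Type*} [MeasurableSpace Ω] {μ : Measure Ω} {n : ℕ}
    {V : Fin n → Ω → ℝ} (hVmeas : ∀ i, Measurable (V i))
    (hVindep : iIndepFun V μ) (τ0 : ℝ)
    (j : Fin n) (S : Finset (Fin n)) (hj : j ∉ S) {E : Set ℝ} (hE : MeasurableSet E) (m : ℕ) :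
    μ ({ω | V j ω ∈ E} ∩ {ω | (S.filter (fun k => τ0 < V k ω)).card = m})
      = μ {ω | V j ω ∈ E} * μ {ω | (S.filter (fun k => τ0 < V k ω)).card = m} := by
  classical
  have hdisj : Disjoint ({j} : Finset (Fin n)) S := by simp [hj]
  have hIF := hVindep.indepFun_finset {j} S hdisj hVmeas
  have hjj : j ∈ ({j} : Finset (Fin n)) := mem_singleton_self j
  set A1 : Set (({j} : Finset (Fin n)) → ℝ) := {f | f ⟨j, hjj⟩ ∈ E} with hA1
  set A2 : Set ({x // x ∈ S} → ℝ) :=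
    {f | (Finset.univ.filter (fun k : {x // x ∈ S} => τ0 < f k)).card = m} with hA2
  have h1 : MeasurableSet A1 := (measurable_pi_apply _) hE
  have h2 : MeasurableSet A2 := (measurable_card_filter τ0) (measurableSet_singleton m)
  have key := hIF.measure_inter_preimage_eq_mul A1 A2 h1 h2
  have e1 : (fun a (i : ({j} : Finset (Fin n))) => V i a) ⁻¹' A1 = {ω | V j ω ∈ E} := rfl
  have e2 : (fun a (i : {x // x ∈ S}) => V i a) ⁻¹' A2
      = {ω | (S.filter (fun k => τ0 < V k ω)).card = m} := by
    ext ω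
    simp only [Set.mem_preimage, hA2, Set.mem_setOf_eq]
    rw [card_filter_subtype S (fun k => τ0 < V k ω)]
  rw [e1, e2] at key
  exact key

lemma measurable_count {Ω : Type*} [MeasurableSpace Ω] {n : ℕ}
    {V : Fin n → Ω → ℝ} (hVmeas : ∀ i, Measurable (V i)) (τ0 : ℝ) (S : Finset (Fin n)) (m : ℕ) :
    MeasurableSet {ω | (S.filter (fun k => τ0 < V k ω)).card = m} := by
  classical
  have h : Measurable (fun ω => (S.filter (fun k => τ0 < V k ω)).card) := by
    have : (fun ω => (S.filter (fun k => τ0 < V k ω)).card)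
        = fun ω => ∑ k ∈ S, if τ0 < V k ω then 1 else 0 := by
      funext ω; rw [Finset.card_filter]
    rw [this]
    apply Finset.measurable_sum
    intro k _
    exact Measurable.ite (measurableSet_lt measurable_const (hVmeas k))
      measurable_const measurable_const
  exact h (measurableSet_singleton m)


lemma gf_prod {Ω : Type*} [MeasurableSpace Ω] (μ : Measure Ω) [IsProbabilityMeasure μ] {n : ℕ}
    (V : Fin n → Ω → ℝ) (hVmeas : ∀ i, Measurable (V i))
    (hVindep : iIndepFun V μ) (τ0 : ℝ) (S : Finset (Fin n)) (u : ℝ) :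
    ∑ m ∈ Finset.range (S.card + 1),
      (μ {ω | (S.filter (fun j => τ0 < V j ω)).card = m}).toReal * u ^ m
    = ∏ j ∈ S, (1 - (μ {ω | τ0 < V j ω}).toReal * (1 - u)) := by
  classical
  induction S using Finset.induction_on with
  | empty =>
    simp only [Finset.filter_empty, Finset.card_empty, Finset.prod_empty]
    have : {ω : Ω | (∅ : Finset (Fin n)).card = 0} = Set.univ := by
      ext ω; simp
    simp [this]
  | @insert j S hjS ih =>
    set q : ℝ := (μ {ω | τ0 < V j ω}).toReal with hq
    set aS : ℕ → ℝ := fun m => (μ {ω | (S.filter (fun k => τ0 < V k ω)).card = m}).toReal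
      with haS
    set b : ℕ → ℝ := fun m => if m = 0 then 0 else aS (m - 1) with hb
    -- complement probability
    have hIoi : {ω | V j ω ∈ Set.Ioi τ0} = {ω | τ0 < V j ω} := rfl
    have hIic : {ω | V j ω ∈ Set.Iic τ0} = {ω | τ0 < V j ω}ᶜ := by
      ext ω; simp [Set.mem_Iic, not_lt]
    have hVjmeas : MeasurableSet {ω | τ0 < V j ω} :=
      measurableSet_lt measurable_const (hVmeas j)
    have hcompl : (μ {ω | V j ω ∈ Set.Iic τ0}).toReal = 1 - q := by
      rw [hIic, measure_compl hVjmeas (measure_ne_top μ _)]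
      rw [measure_univ, ENNReal.toReal_sub_of_le prob_le_one ENNReal.one_ne_top]
      simp [hq]
    have hqIoi : (μ {ω | V j ω ∈ Set.Ioi τ0}).toReal = q := by rw [hIoi]
    -- key measure recursion
    have hcard : ∀ ω, ((insert j S).filter (fun k => τ0 < V k ω)).card
        = (if τ0 < V j ω then 1 else 0) + (S.filter (fun k => τ0 < V k ω)).card := by
      intro ω
      rw [Finset.filter_insert]
      split
      · rw [Finset.card_insert_of_notMem (fun hmem => hjS (Finset.mem_of_mem_filter j hmem))]
        omega
      · simp
    have hrec : ∀ m, (μ {ω | ((insert j S).filter (fun k => τ0 < V k ω)).card = m}).toReal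
        = q * b m + (1 - q) * aS m := by
      intro m
      have hFmeas : ∀ m', MeasurableSet {ω | (S.filter (fun k => τ0 < V k ω)).card = m'} := by
        intro m'
        have h : Measurable (fun ω => (S.filter (fun k => τ0 < V k ω)).card) := by
          have : (fun ω => (S.filter (fun k => τ0 < V k ω)).card)
              = fun ω => ∑ k ∈ S, if τ0 < V k ω then 1 else 0 := by
            funext ω; rw [Finset.card_filter]
          rw [this]
          exact Finset.measurable_sum _ fun k _ => Measurable.ite
            (measurableSet_lt measurable_const (hVmeas k)) measurable_const measurable_const
        exact h (measurableSet_singleton m')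
      match m with
      | 0 =>
        have hset : {ω | ((insert j S).filter (fun k => τ0 < V k ω)).card = 0}
            = {ω | V j ω ∈ Set.Iic τ0} ∩ {ω | (S.filter (fun k => τ0 < V k ω)).card = 0} := by
          ext ω
          simp only [Set.mem_setOf_eq, hcard ω, Set.mem_inter_iff, hIic, Set.mem_compl_iff]
          split <;> rename_i h <;> simp [h]
        rw [hset, indep_pair hVmeas hVindep τ0 j S hjS measurableSet_Iic, ENNReal.toReal_mul,
          hcompl]
        have hb0 : b 0 = 0 := by simp [hb]
        rw [hb0, haS]
        ring
      | (m' + 1) =>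
        have hset : {ω | ((insert j S).filter (fun k => τ0 < V k ω)).card = m' + 1}
            = ({ω | V j ω ∈ Set.Ioi τ0} ∩ {ω | (S.filter (fun k => τ0 < V k ω)).card = m'})
            ∪ ({ω | V j ω ∈ Set.Iic τ0}
                ∩ {ω | (S.filter (fun k => τ0 < V k ω)).card = m' + 1}) := by
          ext ω
          simp only [Set.mem_setOf_eq, hcard ω, Set.mem_union, Set.mem_inter_iff, hIic, hIoi,
            Set.mem_compl_iff, Set.mem_setOf_eq]
          split <;> rename_i h <;> simp [h] <;> omega
        have hdisj2 : Disjoint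
            ({ω | V j ω ∈ Set.Ioi τ0} ∩ {ω | (S.filter (fun k => τ0 < V k ω)).card = m'})
            ({ω | V j ω ∈ Set.Iic τ0}
              ∩ {ω | (S.filter (fun k => τ0 < V k ω)).card = m' + 1}) := by
          apply Set.disjoint_left.2
          rintro ω ⟨h1, -⟩ ⟨h2, -⟩
          rw [hIic] at h2
          exact h2 h1
        have hm2 : MeasurableSet ({ω | V j ω ∈ Set.Iic τ0}
            ∩ {ω | (S.filter (fun k => τ0 < V k ω)).card = m' + 1}) := by
          refine MeasurableSet.inter ?_ (hFmeas _)
          rw [hIic]; exact hVjmeas.compl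
        rw [hset, measure_union hdisj2 hm2,
          indep_pair hVmeas hVindep τ0 j S hjS measurableSet_Ioi,
          indep_pair hVmeas hVindep τ0 j S hjS measurableSet_Iic,
          ENNReal.toReal_add (by finiteness) (by finiteness),
          ENNReal.toReal_mul, ENNReal.toReal_mul, hcompl, hqIoi]
        simp only [hb, Nat.succ_ne_zero, if_false, Nat.add_sub_cancel]
        rfl
    -- now the sum computation
    have hcardS : (insert j S).card = S.card + 1 := Finset.card_insert_of_notMem hjS
    rw [hcardS]
    have hsum : ∑ m ∈ Finset.range (S.card + 1 + 1),
        (μ {ω | ((insert j S).filter (fun k => τ0 < V k ω)).card = m}).toReal * u ^ m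
        = q * ∑ m ∈ Finset.range (S.card + 2), b m * u ^ m
          + (1 - q) * ∑ m ∈ Finset.range (S.card + 2), aS m * u ^ m := by
      rw [Finset.mul_sum, Finset.mul_sum, ← Finset.sum_add_distrib]
      apply Finset.sum_congr rfl
      intro m _
      rw [hrec m]; ring
    rw [hsum]
    have haStop : aS (S.card + 1) = 0 := by
      have : {ω | (S.filter (fun k => τ0 < V k ω)).card = S.card + 1} = ∅ := by
        ext ω
        simp only [Set.mem_setOf_eq, Set.mem_empty_iff_false, iff_false]
        intro h
        have := Finset.card_filter_le S (fun k => τ0 < V k ω)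
        omega
      simp [haS, this]
    have h1 : ∑ m ∈ Finset.range (S.card + 2), b m * u ^ m
        = u * ∑ m ∈ Finset.range (S.card + 1), aS m * u ^ m := by
      rw [Finset.sum_range_succ' (fun m => b m * u ^ m) (S.card + 1)]
      have hb0 : b 0 = 0 := by simp [hb]
      have hbs : ∀ m : ℕ, b (m + 1) = aS m := by intro m; simp [hb]
      rw [hb0, Finset.mul_sum]
      simp only [hbs, pow_zero, mul_one, zero_mul, add_zero]
      apply Finset.sum_congr rfl
      intro m _
      ring
    have h2 : ∑ m ∈ Finset.range (S.card + 2), aS m * u ^ m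
        = ∑ m ∈ Finset.range (S.card + 1), aS m * u ^ m := by
      rw [Finset.sum_range_succ, haStop]
      simp
    rw [h1, h2, Finset.prod_insert hjS, ← ih]
    ring

lemma key_sum_ge (nb : ℕ) (a : ℕ → ℝ) (p : ℝ) (hp0 : 0 < p) (hp1 : p < 1)
    (hGF : ∀ u : ℝ, 0 ≤ u → u ≤ 1 → p ^ (1 - u) ≤ ∑ m ∈ Finset.range nb, a m * u ^ m) :
    (1 - p) / (-Real.log p) ≤ ∑ m ∈ Finset.range nb, a m / (m + 1) := by
  set c := Real.log p with hc
  have hclt : c < 0 := Real.log_neg hp0 hp1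
  have hcne : c ≠ 0 := ne_of_lt hclt
  have hrpow : ∀ u : ℝ, p ^ (1 - u) = Real.exp (c * (1 - u)) := by
    intro u; rw [Real.rpow_def_of_pos hp0]
  -- integral of the lower bound
  have hint1 : ∫ u in (0:ℝ)..1, Real.exp (c * (1 - u)) = (1 - p) / (-c) := by
    rw [intervalIntegral.integral_comp_sub_left (fun v => Real.exp (c * v)) 1]
    norm_num
    rw [intervalIntegral.integral_comp_mul_left Real.exp hcne]
    rw [integral_exp, mul_zero, mul_one, Real.exp_zero, hc, Real.exp_log hp0, smul_eq_mul]
    rw [div_neg, ← neg_div, neg_sub, div_eq_inv_mul]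
  -- integral of the polynomial
  have hint2 : ∫ u in (0:ℝ)..1, (∑ m ∈ Finset.range nb, a m * u ^ m)
      = ∑ m ∈ Finset.range nb, a m / (m + 1) := by
    rw [intervalIntegral.integral_finset_sum]
    · apply Finset.sum_congr rfl
      intro m _
      rw [intervalIntegral.integral_const_mul, integral_pow]
      simp
      ring
    · intro m _
      exact ((continuous_const.mul (continuous_pow m)).intervalIntegrable 0 1)
  have hmono : ∫ u in (0:ℝ)..1, Real.exp (c * (1 - u))
      ≤ ∫ u in (0:ℝ)..1, (∑ m ∈ Finset.range nb, a m * u ^ m) := by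
    apply intervalIntegral.integral_mono_on (by norm_num)
    · exact (Real.continuous_exp.comp (continuous_const.mul
        (continuous_const.sub continuous_id))).intervalIntegrable 0 1
    · apply Continuous.intervalIntegrable
      continuity
    · intro u hu
      rw [← hrpow u]
      exact hGF u hu.1 hu.2
  rw [hint1, hint2] at hmono
  exact hmono

/-- Stopping time of the time-threshold algorithm (1-based time): the first time `k ∈ [1,n]`
at which the revealed value `V_{σ(k)}` strictly exceeds the threshold `τ k`, and `n+1`
(meaning "never stops") if no such time exists. -/
noncomputable def stopT {Ω : Type*} {n : ℕ} (V : Fin n → Ω → ℝ) (τ : ℕ → ℝ)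
    (σ : Ω → Equiv.Perm (Fin n)) (ω : Ω) : ℕ :=
  sInf ({k : ℕ | ∃ j : Fin n, (j : ℕ) + 1 = k ∧ τ k < V (σ ω j) ω} ∪ {n + 1})

lemma stopT_eq_of {Ω : Type*} {n : ℕ} (V : Fin n → Ω → ℝ) (τ0 : ℝ)
    (σ : Ω → Equiv.Perm (Fin n)) (ω : Ω) (j : Fin n)
    (hj : τ0 < V (σ ω j) ω) (hmin : ∀ j' : Fin n, j' < j → V (σ ω j') ω ≤ τ0) :
    stopT V (fun _ => τ0) σ ω = (j : ℕ) + 1 := by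
  have hrw : stopT V (fun _ => τ0) σ ω = sInf ({k : ℕ | ∃ j' : Fin n, (j' : ℕ) + 1 = k
      ∧ τ0 < V (σ ω j') ω} ∪ {n + 1}) := rfl
  rw [hrw]
  have hmem : ((j : ℕ) + 1) ∈
      ({k : ℕ | ∃ j' : Fin n, (j' : ℕ) + 1 = k ∧ τ0 < V (σ ω j') ω} ∪ {n + 1}) :=
    Or.inl ⟨j, rfl, hj⟩
  refine le_antisymm (Nat.sInf_le hmem) ?_
  have hne : ({k : ℕ | ∃ j' : Fin n, (j' : ℕ) + 1 = k ∧ τ0 < V (σ ω j') ω}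
      ∪ {n + 1} : Set ℕ).Nonempty := ⟨_, hmem⟩
  obtain hval := Nat.sInf_mem hne
  rcases hval with ⟨j', hj'1, hj'2⟩ | hval
  · -- sInf = j' + 1 with τ0 < V (σ ω j')
    rw [← hj'1]
    have h1 : ¬ j' < j := fun h => absurd (hmin j' h) (not_le.2 hj'2)
    have h2 : (j : ℕ) ≤ (j' : ℕ) := Fin.le_def.1 (not_lt.1 h1)
    omega
  · rw [Set.mem_singleton_iff] at hval
    rw [hval]
    have := j.isLt
    omega



theorem stmt11 {Ω : Type*} [MeasurableSpace Ω] (μ : Measure Ω) [IsProbabilityMeasure μ]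
    (n : ℕ) (hn : 0 < n) (V : Fin n → Ω → ℝ)
    (hVmeas : ∀ i, Measurable (V i))
    (hVnonneg : ∀ i ω, 0 ≤ V i ω)
    (hVcont : ∀ i, Continuous (fun t => (μ {ω | V i ω ≤ t}).toReal))
    (hVindep : iIndepFun V μ)
    (σ : Ω → Equiv.Perm (Fin n))
    (hσmeas : ∀ π, MeasurableSet {ω | σ ω = π})
    (hσunif : ∀ π, μ {ω | σ ω = π} = ((n.factorial : ENNReal))⁻¹)
    (hindep : ∀ (π : Equiv.Perm (Fin n)) (A : Set (Fin n → ℝ)), MeasurableSet A →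
      μ ({ω | σ ω = π} ∩ {ω | (fun i => V i ω) ∈ A})
        = μ {ω | σ ω = π} * μ {ω | (fun i => V i ω) ∈ A})
    (τ0 : ℝ)
    (p : ℝ) (hp : p = (μ {ω | ∀ i, V i ω ≤ τ0}).toReal) (hp0 : 0 < p) (hp1 : p < 1) :
    ∀ t : ℝ, 0 ≤ t →
      (μ {ω | ∃ j : Fin n, (j : ℕ) + 1 = stopT V (fun _ => τ0) σ ω
            ∧ t < V (σ ω j) ω}).toReal
        ≥ min (1 - p) ((1 - p) / (-Real.log p)) * (μ {ω | ∃ i, t < V i ω}).toReal := by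
  classical
  intro t ht
  set ρ : ℝ := (1 - p) / (-Real.log p) with hρ
  have hlogneg : 0 < -Real.log p := by
    have := Real.log_neg hp0 hp1; linarith
  have hρ0 : 0 ≤ ρ := div_nonneg (by linarith) hlogneg.le
  have hmin0 : 0 ≤ min (1 - p) ρ := le_min (by linarith) hρ0
  set Ev : Set Ω := {ω | ∃ j : Fin n, (j : ℕ) + 1 = stopT V (fun _ => τ0) σ ω
      ∧ t < V (σ ω j) ω} with hEv
  have hX1 : (μ {ω | ∃ i, t < V i ω}).toReal ≤ 1 := by
    rw [← ENNReal.toReal_one]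
    exact ENNReal.toReal_mono ENNReal.one_ne_top prob_le_one
  have hX0 : 0 ≤ (μ {ω | ∃ i, t < V i ω}).toReal := ENNReal.toReal_nonneg
  by_cases htau : t ≤ τ0
  · -- EASY CASE: t ≤ τ0
    have hstop : ∀ ω, (∃ i, τ0 < V i ω) → ω ∈ Ev := by
      intro ω ⟨i, hi⟩
      have hne : (Finset.univ.filter (fun j : Fin n => τ0 < V (σ ω j) ω)).Nonempty := by
        refine ⟨(σ ω).symm i, ?_⟩
        simp only [Finset.mem_filter, Finset.mem_univ, true_and, Equiv.apply_symm_apply]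
        exact hi
      set jm := (Finset.univ.filter (fun j : Fin n => τ0 < V (σ ω j) ω)).min' hne with hjm
      have hjmem := Finset.min'_mem _ hne
      rw [← hjm] at hjmem
      have hjlt : τ0 < V (σ ω jm) ω := (Finset.mem_filter.1 hjmem).2
      have hmin : ∀ j' : Fin n, j' < jm → V (σ ω j') ω ≤ τ0 := by
        intro j' hj'
        by_contra hcon
        have : jm ≤ j' := Finset.min'_le _ _ (by
          simp only [Finset.mem_filter, Finset.mem_univ, true_and]
          exact lt_of_not_ge hcon)
        exact absurd hj' (not_lt.2 this)
      exact ⟨jm, (stopT_eq_of V τ0 σ ω jm hjlt hmin).symm, lt_of_le_of_lt htau hjlt⟩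
    have hsub : {ω | ∀ i, V i ω ≤ τ0}ᶜ ⊆ Ev := by
      intro ω hω
      simp only [Set.mem_compl_iff, Set.mem_setOf_eq, not_forall, not_le] at hω
      exact hstop ω hω
    have hmeasAll : MeasurableSet {ω | ∀ i, V i ω ≤ τ0} := by
      have : {ω | ∀ i, V i ω ≤ τ0} = ⋂ i, {ω | V i ω ≤ τ0} := by
        ext ω; simp
      rw [this]
      exact MeasurableSet.iInter fun i => measurableSet_le (hVmeas i) measurable_const
    have hcompl : (μ {ω | ∀ i, V i ω ≤ τ0}ᶜ).toReal = 1 - p := by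
      rw [measure_compl hmeasAll (measure_ne_top μ _), measure_univ,
        ENNReal.toReal_sub_of_le prob_le_one ENNReal.one_ne_top, ENNReal.toReal_one, hp]
    have h1 : 1 - p ≤ (μ Ev).toReal := by
      rw [← hcompl]
      exact ENNReal.toReal_mono (measure_ne_top μ _) (measure_mono hsub)
    have h2 : min (1 - p) ρ * (μ {ω | ∃ i, t < V i ω}).toReal ≤ 1 - p := by
      calc min (1 - p) ρ * (μ {ω | ∃ i, t < V i ω}).toReal
          ≤ min (1 - p) ρ * 1 := mul_le_mul_of_nonneg_left hX1 hmin0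
        _ = min (1 - p) ρ := mul_one _
        _ ≤ 1 - p := min_le_left _ _
    exact le_trans h2 h1
  · -- HARD CASE: τ0 < t
    push_neg at htau
    -- basic quantities
    set q : Fin n → ℝ := fun i => (μ {ω | τ0 < V i ω}).toReal with hq
    set r : Fin n → ℝ := fun i => (μ {ω | t < V i ω}).toReal with hr
    have hVTmeas : ∀ i, MeasurableSet {ω | τ0 < V i ω} :=
      fun i => measurableSet_lt measurable_const (hVmeas i)
    have hcomp1 : ∀ i, (μ {ω | V i ω ≤ τ0}).toReal = 1 - q i := by
      intro i
      have hcset : {ω | V i ω ≤ τ0} = {ω | τ0 < V i ω}ᶜ := by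
        ext ω; simp [not_lt]
      rw [hcset, measure_compl (hVTmeas i) (measure_ne_top μ _), measure_univ,
        ENNReal.toReal_sub_of_le prob_le_one ENNReal.one_ne_top, ENNReal.toReal_one, hq]
    have hprod : p = ∏ i, (1 - q i) := by
      have hs : {ω | ∀ i, V i ω ≤ τ0} = ⋂ i ∈ Finset.univ, V i ⁻¹' (Set.Iic τ0) := by
        ext ω; simp [Set.mem_iInter, Set.mem_preimage, Set.mem_Iic]
      have hkey := hVindep.measure_inter_preimage_eq_mul (S := Finset.univ)
        (sets := fun _ => Set.Iic τ0) (fun i _ => measurableSet_Iic)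
      rw [hp, hs, hkey, ENNReal.toReal_prod]
      apply Finset.prod_congr rfl
      intro i _
      rw [← hcomp1 i]
      rfl
    have hq0 : ∀ i, 0 ≤ q i := fun i => ENNReal.toReal_nonneg
    have h1qp : ∀ i, p ≤ 1 - q i := by
      intro i
      rw [hprod, ← Finset.prod_erase_mul Finset.univ _ (Finset.mem_univ i)]
      have h1 : ∀ j, (1 : ℝ) - q j ≤ 1 := by
        intro j; have := hq0 j; linarith
      have h0 : ∀ j, (0 : ℝ) ≤ 1 - q j := by
        intro j
        have : (μ {ω | V j ω ≤ τ0}).toReal ≥ 0 := ENNReal.toReal_nonneg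
        rw [hcomp1 j] at this; linarith
      calc (∏ j ∈ Finset.univ.erase i, (1 - q j)) * (1 - q i)
          ≤ 1 * (1 - q i) := by
            apply mul_le_mul_of_nonneg_right _ (h0 i)
            exact Finset.prod_le_one (fun j _ => h0 j) (fun j _ => h1 j)
        _ = 1 - q i := one_mul _
    -- the G sets
    set G : Equiv.Perm (Fin n) → Set Ω := fun π => {ω | ∃ j : Fin n,
        (∀ j' : Fin n, j' < j → V (π j') ω ≤ τ0) ∧ t < V (π j) ω} with hG
    have hGmeas : ∀ π, MeasurableSet (G π) := by
      intro π
      have : G π = ⋃ j : Fin n, ((⋂ j' : Fin n, ⋂ _h : j' < j, {ω | V (π j') ω ≤ τ0})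
          ∩ {ω | t < V (π j) ω}) := by
        ext ω
        simp only [hG, Set.mem_setOf_eq, Set.mem_iUnion, Set.mem_inter_iff, Set.mem_iInter]
      rw [this]
      exact MeasurableSet.iUnion fun j => MeasurableSet.inter
        (MeasurableSet.iInter fun j' => MeasurableSet.iInter fun _ =>
          measurableSet_le (hVmeas (π j')) measurable_const)
        (measurableSet_lt measurable_const (hVmeas (π j)))
    -- Step 1: the union of the pieces is inside Ev
    have hpiece : ∀ π : Equiv.Perm (Fin n), {ω | σ ω = π} ∩ G π ⊆ Ev := by
      rintro π ω ⟨hσω, j, hminj, hjt⟩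
      have hjτ : τ0 < V (π j) ω := lt_trans htau hjt
      rw [Set.mem_setOf_eq] at hσω
      refine ⟨j, ?_, ?_⟩
      · rw [stopT_eq_of V τ0 σ ω j (by rw [hσω]; exact hjτ)
          (by intro j' hj'; rw [hσω]; exact hminj j' hj')]
      · rw [hσω]; exact hjt
    have hstep1 : ∑ π : Equiv.Perm (Fin n), μ ({ω | σ ω = π} ∩ G π) ≤ μ Ev := by
      rw [← measure_biUnion_finset ?hd ?hm]
      · apply measure_mono
        intro ω hω
        rw [Set.mem_iUnion₂] at hω
        obtain ⟨π, -, hω⟩ := hω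
        exact hpiece π hω
      case hd =>
        intro π1 _ π2 _ hne
        apply Set.disjoint_left.2
        rintro ω ⟨h1, -⟩ ⟨h2, -⟩
        exact hne (h1.symm.trans h2)
      case hm =>
        intro π _
        exact (hσmeas π).inter (hGmeas π)
    -- Step 2: independence of σ and the values
    have hstep2 : ∀ π : Equiv.Perm (Fin n),
        μ ({ω | σ ω = π} ∩ G π) = ((n.factorial : ENNReal))⁻¹ * μ (G π) := by
      intro π
      set Aπ : Set (Fin n → ℝ) := {v | ∃ j : Fin n,
          (∀ j' : Fin n, j' < j → v (π j') ≤ τ0) ∧ t < v (π j)} with hAπ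
      have hAmeas : MeasurableSet Aπ := by
        have : Aπ = ⋃ j : Fin n, ((⋂ j' : Fin n, ⋂ _h : j' < j,
            {v : Fin n → ℝ | v (π j') ≤ τ0}) ∩ {v : Fin n → ℝ | t < v (π j)}) := by
          ext v
          simp only [hAπ, Set.mem_setOf_eq, Set.mem_iUnion, Set.mem_inter_iff, Set.mem_iInter]
        rw [this]
        exact MeasurableSet.iUnion fun j => MeasurableSet.inter
          (MeasurableSet.iInter fun j' => MeasurableSet.iInter fun _ =>
            measurableSet_le (measurable_pi_apply _) measurable_const)
          (measurableSet_lt measurable_const (measurable_pi_apply _))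
      have hGA : {ω | (fun i => V i ω) ∈ Aπ} = G π := rfl
      have := hindep π Aπ hAmeas
      rw [hGA, hσunif π] at this
      exact this
    -- the D sets
    set D : Fin n → ℕ → Set Ω := fun i m => {ω | t < V i ω}
        ∩ {ω | ((Finset.univ.erase i).filter (fun k => τ0 < V k ω)).card = m} with hD
    have hDmeas : ∀ i m, MeasurableSet (D i m) := fun i m =>
      (measurableSet_lt measurable_const (hVmeas i)).inter
        (measurable_count hVmeas τ0 _ m)
    -- pointwise counting identity
    have hcount : ∀ ω, (((Finset.univ.filter
          (fun π : Equiv.Perm (Fin n) => ω ∈ G π)).card : ℝ))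
        = ∑ i : Fin n, ∑ m ∈ Finset.range n,
            Set.indicator (D i m) (fun _ => (n.factorial : ℝ) / (m + 1)) ω := by
      intro ω
      set A : Finset (Fin n) := Finset.univ.filter (fun i => τ0 < V i ω) with hA
      set B : Finset (Fin n) := Finset.univ.filter (fun i => t < V i ω) with hB
      have hBA : B ⊆ A := by
        intro i hi
        simp only [hB, Finset.mem_filter, Finset.mem_univ, true_and] at hi
        simp only [hA, Finset.mem_filter, Finset.mem_univ, true_and]
        exact lt_trans htau hi
      have hkey := count_first A B hBA
      have hset : Finset.univ.filter (fun π : Equiv.Perm (Fin n) => ω ∈ G π)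
          = Finset.univ.filter (fun π : Equiv.Perm (Fin n) =>
              ∃ j : Fin n, (∀ j' : Fin n, j' < j → π j' ∉ A) ∧ π j ∈ B) := by
        apply Finset.filter_congr
        intro π _
        simp only [hG, Set.mem_setOf_eq, hA, hB, Finset.mem_filter, Finset.mem_univ,
          true_and, not_lt]
      -- simplify inner sums
      have hNle : ∀ i : Fin n, ((Finset.univ.erase i).filter (fun k => τ0 < V k ω)).card < n := by
        intro i
        calc ((Finset.univ.erase i).filter (fun k => τ0 < V k ω)).card
            ≤ (Finset.univ.erase i).card := Finset.card_filter_le _ _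
          _ = n - 1 := by rw [Finset.card_erase_of_mem (Finset.mem_univ i)]; simp
          _ < n := by omega
      have hinner : ∀ i : Fin n, ∑ m ∈ Finset.range n,
          Set.indicator (D i m) (fun _ => (n.factorial : ℝ) / (m + 1)) ω
          = if t < V i ω then
              (n.factorial : ℝ) / ((((A.erase i).card : ℝ)) + 1) else 0 := by
        intro i
        have herase : (Finset.univ.erase i).filter (fun k => τ0 < V k ω) = A.erase i := by
          rw [hA, Finset.filter_erase]
        by_cases hti : t < V i ω
        · rw [if_pos hti]
          have : ∀ m ∈ Finset.range n, Set.indicator (D i m)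
              (fun _ => (n.factorial : ℝ) / (m + 1)) ω
              = if (A.erase i).card = m then (n.factorial : ℝ) / (m + 1) else 0 := by
            intro m _
            rw [Set.indicator_apply]
            simp only [hD, Set.mem_inter_iff, Set.mem_setOf_eq, herase]
            by_cases hc : (A.erase i).card = m
            · rw [if_pos ⟨hti, hc⟩, if_pos hc]
            · rw [if_neg (fun h => hc h.2), if_neg hc]
          rw [Finset.sum_congr rfl this, Finset.sum_ite_eq (Finset.range n) ((A.erase i).card)
            (fun m => (n.factorial : ℝ) / (m + 1))]
          rw [if_pos (Finset.mem_range.2 (by rw [← herase]; exact hNle i))]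
        · rw [if_neg hti]
          apply Finset.sum_eq_zero
          intro m _
          rw [Set.indicator_apply, if_neg]
          rintro ⟨h1, -⟩
          exact hti h1
      rw [Finset.sum_congr rfl (fun i _ => hinner i), ← Finset.sum_filter, ← hB]
      -- two cases on B
      rcases B.eq_empty_or_nonempty with hBe | hBne
      · rw [hBe]
        simp only [Finset.sum_empty]
        have : Finset.univ.filter (fun π : Equiv.Perm (Fin n) => ω ∈ G π) = ∅ := by
          rw [hset, Finset.filter_eq_empty_iff]
          rintro π - ⟨j, -, hj⟩
          rw [hBe] at hj
          exact absurd hj (Finset.notMem_empty _)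
        rw [this]
        simp
      · have hAne : A.Nonempty := hBne.mono hBA
        have hAcard : 0 < A.card := Finset.card_pos.2 hAne
        have hterm : ∀ i ∈ B, (n.factorial : ℝ) / ((((A.erase i).card : ℝ)) + 1)
            = (n.factorial : ℝ) / (A.card : ℝ) := by
          intro i hi
          congr 1
          rw [Finset.card_erase_of_mem (hBA hi)]
          have : 1 ≤ A.card := hAcard
          push_cast [Nat.cast_sub this]
          ring
        rw [Finset.sum_congr rfl hterm, Finset.sum_const, nsmul_eq_mul, hset]
        have hkR : ((Finset.univ.filter (fun π : Equiv.Perm (Fin n) =>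
            ∃ j : Fin n, (∀ j' : Fin n, j' < j → π j' ∉ A) ∧ π j ∈ B)).card : ℝ) * (A.card : ℝ)
            = (B.card : ℝ) * (n.factorial : ℝ) := by exact_mod_cast hkey
        have hAne0 : (A.card : ℝ) ≠ 0 := by positivity
        field_simp
        linear_combination hkR
    -- integration identity
    have hfact0 : (0:ℝ) < (n.factorial : ℝ) := by positivity
    have hint : ∑ π : Equiv.Perm (Fin n), (μ (G π)).toReal
        = ∑ i : Fin n, ∑ m ∈ Finset.range n,
            ((n.factorial : ℝ) / (m + 1)) * (μ (D i m)).toReal := by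
      have hL : ∑ π : Equiv.Perm (Fin n), (μ (G π)).toReal
          = ∫ ω, ∑ π : Equiv.Perm (Fin n), Set.indicator (G π) (fun _ => (1:ℝ)) ω ∂μ := by
        rw [integral_finset_sum]
        · apply Finset.sum_congr rfl
          intro π _
          rw [integral_indicator_const (1:ℝ) (hGmeas π)]
          simp
          rfl
        · exact fun π _ => (integrable_const (1:ℝ)).indicator (hGmeas π)
      have hR : ∑ i : Fin n, ∑ m ∈ Finset.range n,
            ((n.factorial:ℝ)/(m+1)) * (μ (D i m)).toReal
          = ∫ ω, ∑ i : Fin n, ∑ m ∈ Finset.range n,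
              Set.indicator (D i m) (fun _ => (n.factorial : ℝ)/(m+1)) ω ∂μ := by
        rw [integral_finset_sum]
        · apply Finset.sum_congr rfl; intro i _
          rw [integral_finset_sum]
          · apply Finset.sum_congr rfl; intro m _
            rw [integral_indicator_const _ (hDmeas i m), smul_eq_mul, mul_comm]
            rfl
          · exact fun m _ => (integrable_const _).indicator (hDmeas i m)
        · intro i _
          exact integrable_finset_sum _ (fun m _ => (integrable_const _).indicator (hDmeas i m))
      rw [hL, hR]
      apply integral_congr_ae
      apply Filter.Eventually.of_forall
      intro ω
      have hb : ∑ π : Equiv.Perm (Fin n), Set.indicator (G π) (fun _ => (1:ℝ)) ω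
          = ((Finset.univ.filter (fun π : Equiv.Perm (Fin n) => ω ∈ G π)).card : ℝ) := by
        rw [← Finset.sum_boole]
        apply Finset.sum_congr rfl
        intro π _
        rw [Set.indicator_apply]
      beta_reduce
      rw [hb, hcount ω]
    -- independence
    set a : Fin n → ℕ → ℝ := fun i m =>
      (μ {ω | ((Finset.univ.erase i).filter (fun k => τ0 < V k ω)).card = m}).toReal with ha
    have ha0 : ∀ i m, 0 ≤ a i m := fun i m => ENNReal.toReal_nonneg
    have hr0 : ∀ i, 0 ≤ r i := fun i => ENNReal.toReal_nonneg
    have hDval : ∀ i m, (μ (D i m)).toReal = r i * a i m := by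
      intro i m
      have hEq : {ω | V i ω ∈ Set.Ioi t} = {ω | t < V i ω} := rfl
      have hip := indep_pair hVmeas hVindep τ0 i (Finset.univ.erase i)
        (Finset.notMem_erase i _) (measurableSet_Ioi (a := t)) m
      rw [hEq] at hip
      rw [hD]
      simp only []
      rw [hip, ENNReal.toReal_mul]
    -- generating function bound
    have h1q0 : ∀ j, (0:ℝ) ≤ 1 - q j := fun j => le_trans hp0.le (h1qp j)
    have hGFi : ∀ i : Fin n, ρ ≤ ∑ m ∈ Finset.range n, a i m / (m + 1) := by
      intro i
      apply key_sum_ge n _ p hp0 hp1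
      intro u hu0 hu1
      have hcard : (Finset.univ.erase i).card + 1 = n := by
        rw [Finset.card_erase_of_mem (Finset.mem_univ i)]
        simp only [Finset.card_univ, Fintype.card_fin]
        omega
      have hgf := gf_prod μ V hVmeas hVindep τ0 (Finset.univ.erase i) u
      rw [hcard] at hgf
      rw [ha]
      simp only []
      rw [hgf]
      calc p ^ (1-u)
          ≤ (∏ j ∈ Finset.univ.erase i, (1 - q j)) ^ (1-u) := by
            apply Real.rpow_le_rpow hp0.le ?_ (by linarith)
            rw [hprod, ← Finset.prod_erase_mul Finset.univ _ (Finset.mem_univ i)]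
            have hpe : 0 ≤ ∏ j ∈ Finset.univ.erase i, (1 - q j) :=
              Finset.prod_nonneg (fun j _ => h1q0 j)
            calc (∏ j ∈ Finset.univ.erase i, (1 - q j)) * (1 - q i)
                ≤ (∏ j ∈ Finset.univ.erase i, (1 - q j)) * 1 :=
                  mul_le_mul_of_nonneg_left (by have := hq0 i; linarith) hpe
              _ = _ := mul_one _
        _ = ∏ j ∈ Finset.univ.erase i, ((1 - q j) ^ (1-u)) :=
            (Real.finset_prod_rpow _ _ (fun j _ => h1q0 j) (1-u)).symm
        _ ≤ ∏ j ∈ Finset.univ.erase i, (1 - q j * (1 - u)) := by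
            apply Finset.prod_le_prod
            · intro j _; exact Real.rpow_nonneg (h1q0 j) _
            · intro j _
              have hg := Real.geom_mean_le_arith_mean2_weighted
                (by linarith : (0:ℝ) ≤ 1 - u) hu0 (h1q0 j) zero_le_one (by ring)
              rw [Real.one_rpow, mul_one] at hg
              have hr2 : (1-u)*(1-q j) + u*1 = 1 - q j * (1-u) := by ring
              linarith [hg]
    -- assemble
    have hfinsum : ∑ π : Equiv.Perm (Fin n), ((n.factorial : ℝ))⁻¹ * (μ (G π)).toReal
        ≤ (μ Ev).toReal := by
      have hEN : ∑ π : Equiv.Perm (Fin n), ((n.factorial : ENNReal))⁻¹ * μ (G π) ≤ μ Ev := by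
        rw [← Finset.sum_congr rfl (fun π _ => hstep2 π)]
        exact hstep1
      calc ∑ π : Equiv.Perm (Fin n), ((n.factorial : ℝ))⁻¹ * (μ (G π)).toReal
          = (∑ π : Equiv.Perm (Fin n), ((n.factorial : ENNReal))⁻¹ * μ (G π)).toReal := by
            rw [ENNReal.toReal_sum (fun π _ => ENNReal.mul_ne_top
              (ENNReal.inv_ne_top.2 (by exact_mod_cast Nat.factorial_pos n |>.ne'))
              (measure_ne_top μ _))]
            apply Finset.sum_congr rfl
            intro π _
            rw [ENNReal.toReal_mul, ENNReal.toReal_inv, ENNReal.toReal_natCast]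
        _ ≤ (μ Ev).toReal := ENNReal.toReal_mono (measure_ne_top μ _) hEN
    have halg : ∑ π : Equiv.Perm (Fin n), ((n.factorial : ℝ))⁻¹ * (μ (G π)).toReal
        = ∑ i : Fin n, (∑ m ∈ Finset.range n, a i m / (m + 1)) * r i := by
      rw [← Finset.mul_sum, hint]
      rw [Finset.mul_sum]
      apply Finset.sum_congr rfl
      intro i _
      rw [Finset.mul_sum, Finset.sum_mul]
      apply Finset.sum_congr rfl
      intro m _
      rw [hDval i m]
      field_simp
    have hunion : (μ {ω | ∃ i, t < V i ω}).toReal ≤ ∑ i, r i := by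
      have hs : {ω | ∃ i, t < V i ω} = ⋃ i, {ω | t < V i ω} := by
        ext ω; simp
      have hle : μ {ω | ∃ i, t < V i ω} ≤ ∑ i, μ {ω | t < V i ω} := by
        rw [hs]; exact measure_iUnion_fintype_le _ _
      calc (μ {ω | ∃ i, t < V i ω}).toReal
          ≤ (∑ i, μ {ω | t < V i ω}).toReal := ENNReal.toReal_mono
            (by exact (ENNReal.sum_lt_top.2 (fun i _ => measure_lt_top μ _)).ne) hle
        _ = ∑ i, r i := ENNReal.toReal_sum (fun i _ => measure_ne_top μ _)
    calc min (1-p) ρ * (μ {ω | ∃ i, t < V i ω}).toReal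
        ≤ ρ * (μ {ω | ∃ i, t < V i ω}).toReal :=
          mul_le_mul_of_nonneg_right (min_le_right _ _) hX0
      _ ≤ ρ * ∑ i, r i := mul_le_mul_of_nonneg_left hunion hρ0
      _ = ∑ i : Fin n, ρ * r i := Finset.mul_sum _ _ _
      _ ≤ ∑ i : Fin n, (∑ m ∈ Finset.range n, a i m / (m + 1)) * r i := by
          apply Finset.sum_le_sum
          intro i _
          exact mul_le_mul_of_nonneg_right (hGFi i) (hr0 i)
      _ = ∑ π : Equiv.Perm (Fin n), ((n.factorial : ℝ))⁻¹ * (μ (G π)).toReal := halg.symm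
      _ ≤ (μ Ev).toReal := hfinsum
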